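/- For every ε > 0 there is an integer s₀ such that the following holds for every admissible s ≥ s₀ and every r ≥ 250000·(log₂ s)³. If there is a zero-error randomized algorithm for GPW^{r×s} whose expected cost on every input is at most √r·s/(log₂ s)^5, then there is a deterministic decision tree Q with outputs in {0, 1, 'no answer'} such that: (i) Q queries at most √r·s/(log₂ s)^4 cells on every input; (ii) whenever Q outputs a bit on input X, that bit equals GPW^{r×s}(X); and (iii) Pr_{X∼𝒟}[Q outputs 0 on X] ≥ 1 − ε. -/

import Mathlib

open scoped BigOperators ENNReal
open MeasureTheory

namespace GPW




/-- A cell of the `r × s` array. -/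
abbrev Cell (r s : ℕ) := Fin r × Fin s

/-- An input to the pointer function: each cell holds a bit and an optional pointer. -/
abbrev Input (r s : ℕ) := Cell r s → Bool × Option (Cell r s)

/-- `GPWtrue r s X` holds iff the pointer function `GPW^{r×s}` evaluates to `1` on `X`. -/
def GPWtrue (r s : ℕ) (X : Input r s) : Prop :=
  ∃ jstar : Fin s,
    (∀ i : Fin r, (X (i, jstar)).1 = true) ∧
    (∀ j : Fin s, (∀ i : Fin r, (X (i, j)).1 = true) → j = jstar) ∧
    ∃ istar : Fin r,
      (X (istar, jstar)).2 ≠ none ∧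
      (∀ i : Fin r, (X (i, jstar)).2 ≠ none → i = istar) ∧
      ∃ p : Fin s → Cell r s,
        (∀ h0 : 0 < s, p ⟨0, h0⟩ = (istar, jstar)) ∧
        (∀ k : Fin s, ∀ hk : (k : ℕ) + 1 < s, (X (p k)).2 = some (p ⟨(k : ℕ) + 1, hk⟩)) ∧
        Function.Injective (fun k : Fin s => (p k).2) ∧
        (∀ k : Fin s, 1 ≤ (k : ℕ) → (X (p k)).1 = false)

/-- The pointer function as a Boolean-valued function. -/
noncomputable def GPWbool (r s : ℕ) (X : Input r s) : Bool :=
  @decide (GPWtrue r s X) (Classical.propDecidable _)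

/-- Deterministic decision trees over the cells of the array, with outputs in `β`.
A query to a cell reveals the full pair (bit, pointer) stored there. -/
inductive DTree (r s : ℕ) (β : Type) : Type
  | leaf : β → DTree r s β
  | query : Cell r s → (Bool × Option (Cell r s) → DTree r s β) → DTree r s β

namespace DTree
variable {r s : ℕ} {β : Type}

/-- The output of a decision tree on a given input. -/
def eval : DTree r s β → Input r s → β
  | .leaf b, _ => b
  | .query ℓ t, X => (t (X ℓ)).eval X

/-- The number of cells queried by the tree on a given input. -/
def cost : DTree r s β → Input r s → ℕ
  | .leaf _, _ => 0
  | .query ℓ t, X => (t (X ℓ)).cost X + 1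

/-- The set of cells queried by the tree on a given input. -/
def queried : DTree r s β → Input r s → Finset (Cell r s)
  | .leaf _, _ => ∅
  | .query ℓ t, X => insert ℓ ((t (X ℓ)).queried X)

end DTree

/-- Expected cost of a randomized algorithm (a distribution over deterministic trees). -/
noncomputable def expCost {r s : ℕ} {β : Type} (μ : PMF (DTree r s β)) (X : Input r s) : ℝ≥0∞ :=
  ∑' T, μ T * (DTree.cost T X : ℝ≥0∞)

/-- A zero-error randomized algorithm for `f`: every tree in the support computes `f` exactly. -/
def ZeroError {r s : ℕ} (f : Input r s → Bool) (μ : PMF (DTree r s Bool)) : Prop :=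
  ∀ T ∈ μ.support, ∀ X, DTree.eval T X = f X

/-- Zero-error randomized query complexity. -/
noncomputable def R0 {r s : ℕ} (f : Input r s → Bool) : ℝ≥0∞ :=
  ⨅ (μ : PMF (DTree r s Bool)) (_ : ZeroError f μ), ⨆ X : Input r s, expCost μ X

/-- A bounded-error (error `≤ 1/3`) randomized algorithm for `f`. -/
def BddError {r s : ℕ} (f : Input r s → Bool) (μ : PMF (DTree r s Bool)) : Prop :=
  ∀ X : Input r s, (2/3 : ℝ≥0∞) ≤ μ.toOuterMeasure {T | DTree.eval T X = f X}

/-- Bounded-error randomized query complexity. -/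
noncomputable def Rbdd {r s : ℕ} (f : Input r s → Bool) : ℝ≥0∞ :=
  ⨅ (μ : PMF (DTree r s Bool)) (_ : BddError f μ), ⨆ X : Input r s, expCost μ X


/-- `K = log₂ s − 3·log₂ log₂ s`, the number of blocks of `W`. -/
def KK (s : ℕ) : ℕ := Nat.log2 s - 3 * Nat.log2 (Nat.log2 s)

/-- The number of columns in each block of `W`, namely `s/(2K)`. -/
def blockWidth (s : ℕ) : ℕ := s / (2 * KK s)

/-- The offset of a `W`-column `c` from the first column of `W`. -/
def colOff (s c : ℕ) : ℕ := c - s / 2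

/-- The (1-based) index of the block containing `W`-column `c`. -/
def blkOf (s c : ℕ) : ℕ := colOff s c / blockWidth s + 1

/-- `w_j = s/(40·K·2^j)`, the number of columns of each band of block `W_j` (1-based `j`). -/
def bandWidth (s j : ℕ) : ℕ := s / (40 * KK s * 2 ^ j)

/-- The width of the band containing `W`-column `c`. -/
def wOf (s c : ℕ) : ℕ := bandWidth s (blkOf s c)

/-- The position of `W`-column `c` inside its band. -/
def posOf (s c : ℕ) : ℕ := colOff s c % blockWidth s % wOf s c

/-- The leftmost column of the band containing column `c`; on each row the cells of the
band starting here form a segment. -/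
def segStart (s c : ℕ) : ℕ := c - posOf s c

/-- Half the width of the band whose leftmost column is `c`. -/
def halfW (s c : ℕ) : ℕ := wOf s c / 2

/-- `(r,s)` is admissible: `s` is a power of two and all relevant quantities are integers
(`K ≥ 1`, `2K ∣ s`, and `w_j/2 = s/(80·K·2^j)` is an exact integer for each block `j`). -/
def Admissible (s : ℕ) : Prop :=
  (∃ k : ℕ, s = 2 ^ k) ∧ 0 < KK s ∧ (2 * KK s) ∣ s ∧
    ∀ j : ℕ, 1 ≤ j → j ≤ KK s → (80 * KK s * 2 ^ j) ∣ s

/-- `c` is the leftmost column of some band (equivalently, of a segment on every row). -/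
def IsSegStart (s : ℕ) (c : Fin s) : Prop := s / 2 ≤ (c : ℕ) ∧ posOf s (c : ℕ) = 0

instance (s : ℕ) : DecidablePred (IsSegStart s) := fun _ => by unfold IsSegStart; infer_instance

/-- Bands of `W` (equivalently segments, once a row is fixed), identified by their
leftmost column. -/
abbrev SegHeadCol (s : ℕ) := {c : Fin s // IsSegStart s c}

/-- `ℓ` is a cell lying in the left half of some segment of `W`. -/
def IsLH (r s : ℕ) (ℓ : Cell r s) : Prop :=
  s / 2 ≤ ((ℓ.2 : ℕ)) ∧ posOf s (ℓ.2 : ℕ) < halfW s (segStart s (ℓ.2 : ℕ))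

instance (r s : ℕ) : DecidablePred (IsLH r s) := fun _ => by unfold IsLH; infer_instance

/-- Cells in the left half of some segment of `W`. -/
abbrev LHCell (r s : ℕ) := {ℓ : Cell r s // IsLH r s ℓ}

/-- Cells of `V` (the first `s/2` columns). -/
abbrev VCell (r s : ℕ) := {ℓ : Cell r s // ((ℓ.2 : ℕ)) < s / 2}

/-- The cell `ℓ` belongs to the segment of band `β` in row `i`. -/
def InSegment (r s : ℕ) (i : Fin r) (β : SegHeadCol s) (ℓ : Cell r s) : Prop :=
  ℓ.1 = i ∧ s / 2 ≤ ((ℓ.2 : ℕ)) ∧ segStart s (ℓ.2 : ℕ) = ((β.1 : ℕ))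

/-- Column `c` belongs to band `β`. -/
def InBandCol (s : ℕ) (β : SegHeadCol s) (c : Fin s) : Prop :=
  s / 2 ≤ (c : ℕ) ∧ segStart s (c : ℕ) = ((β.1 : ℕ))

/-- Product of finitely many PMFs: independent coordinates. -/
noncomputable def pmfPi {ι : Type} [Fintype ι] [DecidableEq ι] {α : ι → Type}
    [∀ i, Fintype (α i)] (p : ∀ i, PMF (α i)) : PMF (∀ i, α i) :=
  ⟨fun g => ∏ i, p i (g i), by
    have h1 : ∀ i, ∑ x : α i, p i x = 1 := fun i => by
      have h := (p i).tsum_coe; rwa [tsum_fintype] at h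
    have h2 : ∑ g : ∀ i, α i, ∏ i, p i (g i) = 1 := by
      rw [← Fintype.piFinset_univ, ← Finset.prod_univ_sum]
      simp [h1]
    have h3 := hasSum_fintype (fun g : ∀ i, α i => ∏ i, p i (g i))
    rwa [h2] at h3⟩

/-- Index set of the per-segment random choices: a row together with a band. -/
abbrev WSeedIdx (r s : ℕ) := Fin r × SegHeadCol s

/-- The random data for one segment: a uniformly random ordering of the cells of its left
half, encoded as a permutation of `Fin (w/2)`. -/
abbrev WSeedFiber (r s : ℕ) (p : WSeedIdx r s) : Type := Equiv.Perm (Fin (halfW s ((p.2.1 : ℕ))))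

/-- All the random data determining the pointers of `W`. -/
abbrev WSeed (r s : ℕ) := ∀ p : WSeedIdx r s, WSeedFiber r s p

/-- Build the cell in row `i` and column `c`, if `c < s`. -/
def mkCell (r s : ℕ) (i : Fin r) (c : ℕ) : Option (Cell r s) :=
  if h : c < s then some (i, ⟨c, h⟩) else none

/-- The pointer stored at the `W`-cell `(i, c)`, built from the seed `g`: random pointer
chains in left halves of segments, left-to-right paths in right halves, chains concatenated
from left to right along each row, and `⊥` in the last column of `W`. -/
def ptrW {r s : ℕ} (g : WSeed r s) (i : Fin r) (c : Fin s) : Option (Cell r s) :=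
  if hc : segStart s (c : ℕ) < s then
    if hs : IsSegStart s ⟨segStart s (c : ℕ), hc⟩ then
      let π := g (i, ⟨⟨segStart s (c : ℕ), hc⟩, hs⟩)
      if hp : (c : ℕ) - segStart s (c : ℕ) < halfW s (segStart s (c : ℕ)) then
        -- `c` is in the left half: follow the random chain
        let k : ℕ := (π.symm ⟨(c : ℕ) - segStart s (c : ℕ), hp⟩ : Fin _)
        if hk : k + 1 < halfW s (segStart s (c : ℕ)) then
          mkCell r s i (segStart s (c : ℕ) + (π ⟨k + 1, hk⟩ : Fin _))
        else -- tail of the chain: point to the head of the right-half path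
          mkCell r s i (segStart s (c : ℕ) + halfW s (segStart s (c : ℕ)))
      else if (c : ℕ) + 1 < segStart s (c : ℕ) + 2 * halfW s (segStart s (c : ℕ)) then
        -- interior of the right-half path
        mkCell r s i ((c : ℕ) + 1)
      else if hn : (c : ℕ) + 1 < s then
        -- last cell of the segment: point to the head of the next segment's chain
        if hs' : IsSegStart s ⟨(c : ℕ) + 1, hn⟩ then
          let π' := g (i, ⟨⟨(c : ℕ) + 1, hn⟩, hs'⟩)
          if h0 : 0 < halfW s ((c : ℕ) + 1) then
            mkCell r s i ((c : ℕ) + 1 + (π' ⟨0, h0⟩ : Fin _))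
          else none
        else none
      else none -- last column of W: pointer is ⊥
    else none
  else none

/-- Build an input from the independent seeds for `V` and for `W`. -/
def buildInput {r s : ℕ} (gV : VCell r s → Option (LHCell r s)) (gW : WSeed r s) :
    Input r s :=
  fun ℓ =>
    if hv : ((ℓ.2 : ℕ)) < s / 2 then
      match gV ⟨ℓ, hv⟩ with
      | none => (true, none)
      | some t => (false, some t.1)
    else (false, ptrW gW ℓ.1 ℓ.2)

/-- `q = 500·log₂ s/√r` (as a probability, clamped at 1). -/
noncomputable def qProb (r s : ℕ) : ℝ≥0∞ :=
  min (ENNReal.ofReal (500 * Real.logb 2 s / Real.sqrt r)) 1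

/-- Distribution of the data of one `V`-cell: with probability `q` the bit is `0` and the
pointer is uniform over cells in left halves of segments of `W` (encoded `some t`); with
probability `1 − q` the bit is `1` and the pointer is `⊥` (encoded `none`). -/
noncomputable def vCoord (r s : ℕ) : PMF (Option (LHCell r s)) :=
  letI : Decidable (Nonempty (LHCell r s)) := Classical.propDecidable _
  (PMF.ofFintype (fun b => cond b (qProb r s) (1 - qProb r s))
    (by have h : qProb r s ≤ 1 := min_le_right _ _; simp [h])).bind fun b =>
    if b then
      if _hne : Nonempty (LHCell r s) then (PMF.uniformOfFintype (LHCell r s)).map some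
      else PMF.pure none
    else PMF.pure none

/-- Distribution of the data of one segment: a uniformly random ordering of its left half. -/
noncomputable def wCoord (r s : ℕ) (p : WSeedIdx r s) : PMF (WSeedFiber r s p) :=
  letI : Nonempty (WSeedFiber r s p) := ⟨Equiv.refl _⟩
  PMF.uniformOfFintype _

/-- The distribution `𝒟` on inputs from Section 2.1 of the paper. -/
noncomputable def Dist (r s : ℕ) : PMF (Input r s) :=
  (pmfPi fun _ : VCell r s => vCoord r s).bind fun gV =>
    (pmfPi (wCoord r s)).map fun gW => buildInput gV gW

/-- The edge relation of the bipartite graph `G_X` between a column `j` of `V` and a band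
`β` of `W`, relative to the set `Qs` of cells probed by the algorithm (conditions
(c1)–(c3)). -/
def GEdge {r s : ℕ} (X : Input r s) (Qs : Finset (Cell r s)) (j : Fin s) (β : SegHeadCol s) :
    Prop :=
  ∃ (i i' : Fin r) (u : Cell r s),
    (X (i, j)).2 = some u ∧
    -- (c1) the pointer at `(i,j)` lands in the left half of the segment of `β` in row `i'`
    InSegment r s i' β u ∧ (u.2 : ℕ) - ((β.1 : ℕ)) < halfW s ((β.1 : ℕ)) ∧
    -- (c2) the predecessor of the landing cell exists and is not probed
    (∃ u' : Cell r s, InSegment r s i' β u' ∧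
      (u'.2 : ℕ) - ((β.1 : ℕ)) < halfW s ((β.1 : ℕ)) ∧ (X u').2 = some u ∧ u' ∉ Qs) ∧
    -- (c3) fewer than `|p|/4` cells of the segment are probed
    4 * Nat.card {z : Cell r s // z ∈ Qs ∧ InSegment r s i' β z} < wOf s ((β.1 : ℕ))
namespace DTree

/-- Truncate a decision tree at depth `n`, outputting `none` when truncated. -/
def trunc {r s : ℕ} {β : Type} : ℕ → DTree r s β → DTree r s (Option β)
  | 0, _ => .leaf none
  | _+1, .leaf b => .leaf (some b)
  | n+1, .query ℓ t => .query ℓ fun a => trunc n (t a)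

lemma cost_trunc_le {r s : ℕ} {β : Type} :
    ∀ (n : ℕ) (T : DTree r s β) (X : Input r s), (trunc n T).cost X ≤ n
  | 0, T, X => by cases T <;> simp [trunc, cost]
  | _+1, .leaf _, X => by simp [trunc, cost]
  | n+1, .query ℓ t, X => by
      simpa [trunc, cost] using cost_trunc_le n (t (X ℓ)) X

lemma eval_trunc_some {r s : ℕ} {β : Type} :
    ∀ (n : ℕ) (T : DTree r s β) (X : Input r s) (b : β),
      (trunc n T).eval X = some b → b = T.eval X
  | 0, T, X, b => by simp [trunc, eval]
  | _+1, .leaf c, X, b => by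
      simp only [trunc, eval]
      intro h; exact (Option.some_injective _ h).symm
  | n+1, .query ℓ t, X, b => by
      simpa [trunc, eval] using eval_trunc_some n (t (X ℓ)) X b

lemma eval_trunc_of_lt {r s : ℕ} {β : Type} :
    ∀ (n : ℕ) (T : DTree r s β) (X : Input r s),
      T.cost X < n → (trunc n T).eval X = some (T.eval X)
  | 0, _, _, h => absurd h (Nat.not_lt_zero _)
  | _+1, .leaf _, X, _ => by simp [trunc, eval]
  | n+1, .query ℓ t, X, h => by
      simp only [trunc, eval]
      exact eval_trunc_of_lt n (t (X ℓ)) X (by simpa [cost] using h)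

end DTree

lemma gpwbool_buildInput_eq_false (r s : ℕ) (gV : VCell r s → Option (LHCell r s))
    (gW : WSeed r s) : GPWbool r s (buildInput gV gW) = false := by
  unfold GPWbool
  suffices hnot : ¬ GPWtrue r s (buildInput gV gW) by exact @decide_eq_false _ (Classical.propDecidable _) hnot
  rintro ⟨j, h1, -, i, hptr, -⟩
  by_cases hv : ((j : ℕ)) < s / 2
  · cases hgv : gV ⟨(i, j), hv⟩ with
    | none =>
        apply hptr
        show (buildInput gV gW (i, j)).2 = none
        simp [buildInput, hv, hgv]
    | some t =>
        have hb : (buildInput gV gW (i, j)).1 = false := by simp [buildInput, hv, hgv]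
        have := h1 i
        rw [this] at hb
        simp at hb
  · have hb : (buildInput gV gW (i, j)).1 = false := by simp [buildInput, hv]
    have := h1 i
    rw [this] at hb
    simp at hb

lemma gpwbool_eq_false_of_mem_support {r s : ℕ} {X : Input r s}
    (hX : X ∈ (Dist r s).support) : GPWbool r s X = false := by
  rw [Dist, PMF.mem_support_bind_iff] at hX
  obtain ⟨gV, -, hX⟩ := hX
  rw [PMF.mem_support_map_iff] at hX
  obtain ⟨gW, -, rfl⟩ := hX
  exact gpwbool_buildInput_eq_false r s gV gW


set_option maxHeartbeats 2000000 in
/-- Proposition 6: from a zero-error randomized algorithm with expected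
cost at most `√r·s/(log₂ s)^5` one gets a deterministic tree with outputs in
`{0, 1, no answer}` that makes at most `√r·s/(log₂ s)^4` queries, never answers wrongly,
and answers `0` with probability `≥ 1 − ε` over `X ∼ 𝒟`. -/
theorem exists_deterministic_from_zero_error :
    ∀ ε : ℝ, 0 < ε → ∃ s₀ : ℕ, ∀ s r : ℕ,
      Admissible s → s₀ ≤ s → 250000 * Real.logb 2 s ^ 3 ≤ (r : ℝ) →
      (∃ μ : PMF (DTree r s Bool), ZeroError (GPWbool r s) μ ∧
        ∀ X : Input r s,
          expCost μ X ≤ ENNReal.ofReal (Real.sqrt r * s / Real.logb 2 s ^ 5)) →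
      ∃ Q : DTree r s (Option Bool),
        (∀ X : Input r s, (DTree.cost Q X : ℝ) ≤ Real.sqrt r * s / Real.logb 2 s ^ 4) ∧
        (∀ X : Input r s, ∀ b : Bool, DTree.eval Q X = some b → b = GPWbool r s X) ∧
        1 - ENNReal.ofReal ε ≤
          (Dist r s).toOuterMeasure {X : Input r s | DTree.eval Q X = some false} := by
  intro ε hε
  refine ⟨2 ^ (40 + ⌈4 / ε⌉₊), fun s r _hadm hs hr hμ => ?_⟩
  obtain ⟨μ, hZE, hcost⟩ := hμ
  classical
  set L := Real.logb 2 s with hLdef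
  set k := 40 + ⌈4 / ε⌉₊ with hkdef
  -- `s ≥ 2^k`
  have hs2 : (2:ℝ) ^ k ≤ (s:ℝ) := by
    have : ((2 ^ k : ℕ) : ℝ) ≤ (s : ℝ) := Nat.cast_le.mpr hs
    simpa using this
  have h2k1 : (1:ℝ) ≤ (2:ℝ) ^ k := one_le_pow₀ one_le_two
  have hs1 : (1:ℝ) ≤ (s:ℝ) := le_trans h2k1 hs2
  have hs0 : (0:ℝ) < (s:ℝ) := lt_of_lt_of_le one_pos hs1
  have hLk : (k : ℝ) ≤ L := by
    have h1 : Real.logb 2 ((2:ℝ) ^ k) ≤ Real.logb 2 s :=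
      Real.logb_le_logb_of_le one_lt_two (by positivity) hs2
    rwa [Real.logb_pow, Real.logb_self_eq_one one_lt_two, mul_one] at h1
  have hL40 : (40:ℝ) ≤ L := by
    refine le_trans ?_ hLk
    rw [hkdef]; push_cast; linarith [Nat.cast_nonneg (α := ℝ) ⌈4 / ε⌉₊]
  have hL0 : (0:ℝ) < L := by linarith
  have hεL : (4:ℝ) ≤ ε * L := by
    have h1 : (4:ℝ)/ε ≤ (⌈4/ε⌉₊ : ℝ) := Nat.le_ceil _
    have h2 : (4:ℝ)/ε ≤ L := by
      refine le_trans h1 (le_trans ?_ hLk)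
      rw [hkdef]; push_cast; linarith
    calc (4:ℝ) = ε * (4/ε) := by field_simp
    _ ≤ ε * L := by nlinarith
  -- `s ≥ (L/8)^5`
  have hsL : (L/8)^5 ≤ (s:ℝ) := by
    have hlog2 : (0:ℝ) < Real.log 2 := Real.log_pos one_lt_two
    have h1 : L * Real.log 2 = Real.log s := by
      rw [hLdef, Real.logb]; field_simp
    have h2 : Real.exp (L * Real.log 2) = (s:ℝ) := by rw [h1, Real.exp_log hs0]
    set t := L * Real.log 2 with htdef
    have ht : 0 ≤ t := by positivity
    have h4 : 1 + t/5 ≤ Real.exp (t/5) := by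
      have := Real.add_one_le_exp (t/5); linarith
    have h5 : (t/5)^5 ≤ (1 + t/5)^5 := by
      apply pow_le_pow_left₀ (by positivity); linarith
    have h6 : (1+t/5)^5 ≤ (Real.exp (t/5))^5 := by
      apply pow_le_pow_left₀ (by positivity) h4
    have h7 : (Real.exp (t/5))^5 = Real.exp t := by
      rw [← Real.exp_nat_mul]; congr 1; push_cast; ring
    have hlog2' : (0.6931471803:ℝ) < Real.log 2 := Real.log_two_gt_d9
    have h8 : L/8 ≤ t/5 := by rw [htdef]; nlinarith
    have h9 : (L/8)^5 ≤ (t/5)^5 := by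
      apply pow_le_pow_left₀ (by positivity) h8
    nlinarith [h2, h7]
  -- `√r ≥ 32768`
  have hrL : 250000 * L ^ 3 ≤ (r:ℝ) := hr
  have hcube : (40:ℝ)^3 ≤ L^3 := pow_le_pow_left₀ (by norm_num) hL40 3
  have hr0 : (32768:ℝ)^2 ≤ (r:ℝ) := by nlinarith
  have hsqrt : (32768:ℝ) ≤ Real.sqrt r := by
    have h1 := Real.sqrt_le_sqrt hr0
    rwa [Real.sqrt_sq (by norm_num : (0:ℝ) ≤ 32768)] at h1
  have hsqrt0 : (0:ℝ) ≤ Real.sqrt r := Real.sqrt_nonneg _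
  -- `c' ≥ 1`
  set c' := Real.sqrt r * s / L^5 with hc'def
  have hc1 : (1:ℝ) ≤ c' := by
    rw [hc'def, le_div_iff₀ (by positivity)]
    have hkey : (32768:ℝ) * ((L/8)^5) ≤ Real.sqrt r * s :=
      mul_le_mul hsqrt hsL (by positivity) hsqrt0
    have hring : (32768:ℝ) * ((L/8)^5) = L^5 := by ring
    linarith
  set B := Real.sqrt r * s / L^4 with hBdef
  have hBc : B = c' * L := by
    rw [hBdef, hc'def]; field_simp
  have hB0 : (0:ℝ) ≤ B := by positivity
  set N := ⌊B⌋₊ with hNdef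
  have hNle : (N:ℝ) ≤ B := Nat.floor_le hB0
  have hNge : B - 1 ≤ (N:ℝ) := le_of_lt (Nat.sub_one_lt_floor B)
  have hN1 : (1:ℝ) ≤ (N:ℝ) := by nlinarith
  have hNne : N ≠ 0 := by
    intro h0; rw [h0] at hN1; norm_num at hN1
  have h2cr : ε ≤ 1 → 2 * c' ≤ ε * (N:ℝ) := by
    intro hε1
    have e0 : (0:ℝ) ≤ (N:ℝ) - B + 1 := by linarith
    have e1 : ε * B - ε ≤ ε * (N:ℝ) := by nlinarith [mul_nonneg hε.le e0]
    have e2 : ε * B = (ε * L) * c' := by rw [hBc]; ring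
    have e3 : 4 * c' ≤ (ε * L) * c' := by
      nlinarith [mul_nonneg (by linarith : (0:ℝ) ≤ ε * L - 4) (by linarith : (0:ℝ) ≤ c')]
    linarith
  set 𝒟 := Dist r s with h𝒟def
  -- select a good tree from the support
  have hEx : ∃ T ∈ μ.support,
      (∑ X : Input r s, 𝒟 X * (DTree.cost T X : ℝ≥0∞)) ≤ ENNReal.ofReal (2 * c') := by
    by_contra hcon
    push_neg at hcon
    have swap : (∑' T : DTree r s Bool, μ T * ∑ X : Input r s, 𝒟 X * (DTree.cost T X : ℝ≥0∞))
        = ∑ X : Input r s, 𝒟 X * expCost μ X := by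
      calc (∑' T : DTree r s Bool, μ T * ∑ X : Input r s, 𝒟 X * (DTree.cost T X : ℝ≥0∞))
          = ∑' T : DTree r s Bool, ∑' X : Input r s,
              𝒟 X * (μ T * (DTree.cost T X : ℝ≥0∞)) := by
            congr 1; funext T
            rw [tsum_fintype, Finset.mul_sum]
            congr 1; funext X; ring
        _ = ∑' X : Input r s, ∑' T : DTree r s Bool,
              𝒟 X * (μ T * (DTree.cost T X : ℝ≥0∞)) := ENNReal.tsum_comm
        _ = ∑ X : Input r s, 𝒟 X * expCost μ X := by
            rw [tsum_fintype]
            congr 1; funext X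
            rw [ENNReal.tsum_mul_left]; rfl
    have hub : (∑' T : DTree r s Bool, μ T * ∑ X : Input r s, 𝒟 X * (DTree.cost T X : ℝ≥0∞))
        ≤ ENNReal.ofReal c' := by
      rw [swap]
      calc (∑ X : Input r s, 𝒟 X * expCost μ X)
          ≤ ∑ X : Input r s, 𝒟 X * ENNReal.ofReal c' :=
            Finset.sum_le_sum fun X _ => mul_le_mul_right (hcost X) _
        _ = (∑ X : Input r s, 𝒟 X) * ENNReal.ofReal c' := by rw [Finset.sum_mul]
        _ = ENNReal.ofReal c' := by
            rw [← tsum_fintype (L := SummationFilter.unconditional _), PMF.tsum_coe, one_mul]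
    have hlb : ENNReal.ofReal (2 * c')
        ≤ (∑' T : DTree r s Bool, μ T * ∑ X : Input r s, 𝒟 X * (DTree.cost T X : ℝ≥0∞)) := by
      calc ENNReal.ofReal (2 * c')
          = ∑' T : DTree r s Bool, μ T * ENNReal.ofReal (2 * c') := by
            rw [ENNReal.tsum_mul_right, PMF.tsum_coe, one_mul]
        _ ≤ _ := by
            refine ENNReal.tsum_le_tsum fun T => ?_
            by_cases hT : T ∈ μ.support
            · exact mul_le_mul_right (le_of_lt (hcon T hT)) _
            · have : μ T = 0 := by
                rwa [PMF.mem_support_iff, not_ne_iff] at hT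
              simp [this]
    have : (2:ℝ) * c' ≤ c' :=
      (ENNReal.ofReal_le_ofReal_iff (by linarith)).mp (le_trans hlb hub)
    linarith
  obtain ⟨T, hTsupp, hTE⟩ := hEx
  refine ⟨DTree.trunc N T, ?_, ?_, ?_⟩
  · intro X
    refine le_trans ?_ hNle
    exact_mod_cast Nat.cast_le.mpr (DTree.cost_trunc_le N T X)
  · intro X b hb
    exact (DTree.eval_trunc_some N T X b hb).trans (hZE T hTsupp X)
  · by_cases hε1 : ε ≤ 1
    · set A := {X : Input r s | DTree.cost T X < N} with hAdef
      have hsub : A ∩ 𝒟.support ⊆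
          {X : Input r s | DTree.eval (DTree.trunc N T) X = some false} := by
        rintro X ⟨hXA, hXs⟩
        have h1 := DTree.eval_trunc_of_lt N T X hXA
        rw [Set.mem_setOf_eq, h1, hZE T hTsupp X, gpwbool_eq_false_of_mem_support hXs]
      have hmark : 𝒟.toOuterMeasure Aᶜ ≤ ENNReal.ofReal ε := by
        have hkey : (N:ℝ≥0∞) * 𝒟.toOuterMeasure Aᶜ ≤ ENNReal.ofReal (2 * c') := by
          rw [PMF.toOuterMeasure_apply, ← ENNReal.tsum_mul_left]
          refine le_trans (ENNReal.tsum_le_tsum fun X => ?_)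
            (by rw [tsum_fintype]; exact hTE)
          by_cases hX : X ∈ Aᶜ
          · rw [Set.indicator_of_mem hX, mul_comm]
            have hcX : (N:ℝ≥0∞) ≤ (DTree.cost T X : ℝ≥0∞) := by
              have : N ≤ DTree.cost T X := not_lt.mp hX
              exact_mod_cast this
            exact mul_le_mul_right hcX _
          · rw [Set.indicator_of_notMem hX, mul_zero]
            exact zero_le
        have h2c : ENNReal.ofReal (2 * c') ≤ ENNReal.ofReal ε * (N:ℝ≥0∞) := by
          rw [← ENNReal.ofReal_natCast N, ← ENNReal.ofReal_mul (le_of_lt hε)]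
          exact ENNReal.ofReal_le_ofReal (h2cr hε1)
        have h3 : 𝒟.toOuterMeasure Aᶜ * (N:ℝ≥0∞) ≤ ENNReal.ofReal ε * (N:ℝ≥0∞) := by
          rw [mul_comm]
          exact le_trans hkey h2c
        exact (ENNReal.mul_le_mul_iff_left (by exact_mod_cast hNne) (ENNReal.natCast_ne_top N)).mp h3
      have hAne : 𝒟.toOuterMeasure Aᶜ ≠ ⊤ :=
        (lt_of_le_of_lt hmark ENNReal.ofReal_lt_top).ne
      have hsum : 𝒟.toOuterMeasure A + 𝒟.toOuterMeasure Aᶜ = 1 := by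
        rw [PMF.toOuterMeasure_apply, PMF.toOuterMeasure_apply, ← ENNReal.tsum_add,
          ← PMF.tsum_coe 𝒟]
        congr 1; funext X
        by_cases hX : X ∈ A
        · rw [Set.indicator_of_mem hX, Set.indicator_of_notMem (by simpa using hX), add_zero]
        · rw [Set.indicator_of_notMem hX, Set.indicator_of_mem (by simpa using hX), zero_add]
      have hPA : 1 - ENNReal.ofReal ε ≤ 𝒟.toOuterMeasure A := by
        calc 1 - ENNReal.ofReal ε ≤ 1 - 𝒟.toOuterMeasure Aᶜ := tsub_le_tsub_left hmark 1
        _ = 𝒟.toOuterMeasure A := by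
            rw [← hsum, ENNReal.add_sub_cancel_right hAne]
      exact le_trans hPA (PMF.toOuterMeasure_mono 𝒟 hsub)
    · have h1 : (1:ℝ≥0∞) ≤ ENNReal.ofReal ε := by
        rw [ENNReal.one_le_ofReal]; linarith
      rw [tsub_eq_zero_of_le h1]
      exact zero_le


end GPW
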